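/- Let 𝐂 be a full semi-AFL, G a finitely generated group, and H ≤ G a subgroup of finite index. Then, for each • ∈ {∀, ∃}: the family 𝐂^•(G) is closed under complement in G (i.e. X ∈ 𝐂^•(G) implies G \ X ∈ 𝐂^•(G)) if and only if the family 𝐂^•(H) is closed under complement in H (i.e. Y ∈ 𝐂^•(H) implies H \ Y ∈ 𝐂^•(H)). -/

import Mathlib

/-!  Common framework: classes of languages over finite alphabets, `C^∀`- and
`C^∃`-subsets of finitely generated monoids and groups, closure properties
(cone, full semi-AFL), and `C^•`-flatness.  -/

/-- A class of languages: for each finite alphabet `Fin n`, a collection of languages over it. -/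
abbrev LangClass : Type := ∀ n : ℕ, Set (Set (List (Fin n)))

/-- `π` is a surjective monoid homomorphism from the free monoid on `Fin n`
(words, under concatenation) onto `M`; i.e. it presents `M` as a monoid generated
by the finite set `Fin n`. -/
structure FreeHomOnto {n : ℕ} (M : Type) [Monoid M] (π : List (Fin n) → M) : Prop where
  map_nil : π [] = 1
  map_append : ∀ u v : List (Fin n), π (u ++ v) = π u * π v
  surjective : Function.Surjective π

/-- `X ⊆ M` is a `C^∀`-subset of `M` w.r.t. the generating map `π`:
the full preimage `π⁻¹(X)` is a language of the class `C`. -/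
def CForall (C : LangClass) {n : ℕ} {M : Type} [Monoid M]
    (π : List (Fin n) → M) (X : Set M) : Prop :=
  {w : List (Fin n) | π w ∈ X} ∈ C n

/-- `X ⊆ M` is a `C^∃`-subset of `M` w.r.t. the generating map `π`:
some language of the class `C` is mapped onto `X` by `π`. -/
def CExists (C : LangClass) {n : ℕ} {M : Type} [Monoid M]
    (π : List (Fin n) → M) (X : Set M) : Prop :=
  ∃ L ∈ C n, π '' L = X

/-- Closure under inverse images of homomorphisms of free monoids on finite alphabets.
Such a homomorphism is determined by its values `f i` on letters, sending `w` to `w.flatMap f`. -/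
def ClosedUnderInvHom (C : LangClass) : Prop :=
  ∀ (m n : ℕ) (f : Fin m → List (Fin n)), ∀ L ∈ C n,
    {w : List (Fin m) | w.flatMap f ∈ L} ∈ C m

/-- Closure under images of homomorphisms of free monoids on finite alphabets. -/
def ClosedUnderHom (C : LangClass) : Prop :=
  ∀ (m n : ℕ) (f : Fin m → List (Fin n)), ∀ L ∈ C m,
    (fun w : List (Fin m) => w.flatMap f) '' L ∈ C n

/-- A language over `Fin n` is regular if it is accepted by a DFA with finitely many states. -/
def IsRegularLang {n : ℕ} (L : Set (List (Fin n))) : Prop :=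
  ∃ (σ : Type) (_ : Fintype σ) (A : DFA (Fin n) σ), ∀ w : List (Fin n), w ∈ A.accepts ↔ w ∈ L

/-- Closure under intersection with regular languages. -/
def ClosedUnderInterReg (C : LangClass) : Prop :=
  ∀ (n : ℕ), ∀ L ∈ C n, ∀ R : Set (List (Fin n)), IsRegularLang R → L ∩ R ∈ C n

/-- Closure under (binary) union. -/
def ClosedUnderUnion (C : LangClass) : Prop :=
  ∀ (n : ℕ), ∀ L₁ ∈ C n, ∀ L₂ ∈ C n, L₁ ∪ L₂ ∈ C n

/-- A cone: a class of languages closed under homomorphisms, inverse homomorphisms,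
and intersection with regular languages. -/
def IsCone (C : LangClass) : Prop :=
  ClosedUnderHom C ∧ ClosedUnderInvHom C ∧ ClosedUnderInterReg C

/-- A full semi-AFL: a cone closed under union. -/
def IsFullSemiAFL (C : LangClass) : Prop :=
  IsCone C ∧ ClosedUnderUnion C

/-- `G` is `C^∀`-flat as a group: for every finitely generated subgroup `H ≤ G`
(presented by a finite monoid generating map `ρ`), a subset of `H` is a `C^∀`-subset
of `G` iff it is a `C^∀`-subset of `H`; i.e. `C^∀(G | H) = C^∀(H)`. -/
def GroupCForallFlat (C : LangClass) (G : Type) [Group G] : Prop :=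
  ∀ (H : Subgroup G) (n k : ℕ) (π : List (Fin n) → G) (ρ : List (Fin k) → ↥H),
    FreeHomOnto G π → FreeHomOnto (↥H) ρ →
      ∀ X : Set G, X ⊆ (H : Set G) →
        (CForall C π X ↔ CForall C ρ (Subtype.val ⁻¹' X))

/-- `G` is `C^∃`-flat as a group: for every finitely generated subgroup `H ≤ G`,
a subset of `H` is a `C^∃`-subset of `G` iff it is a `C^∃`-subset of `H`;
i.e. `C^∃(G | H) = C^∃(H)`. -/
def GroupCExistsFlat (C : LangClass) (G : Type) [Group G] : Prop :=
  ∀ (H : Subgroup G) (n k : ℕ) (π : List (Fin n) → G) (ρ : List (Fin k) → ↥H),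
    FreeHomOnto G π → FreeHomOnto (↥H) ρ →
      ∀ X : Set G, X ⊆ (H : Set G) →
        (CExists C π X ↔ CExists C ρ (Subtype.val ⁻¹' X))

/-- `M` is `C^∀`-flat as a monoid: for every finitely generated submonoid `N ≤ M`,
a subset of `N` is a `C^∀`-subset of `M` iff it is a `C^∀`-subset of `N`;
i.e. `C^∀(M | N) = C^∀(N)`. -/
def MonoidCForallFlat (C : LangClass) (M : Type) [Monoid M] : Prop :=
  ∀ (N : Submonoid M) (n k : ℕ) (π : List (Fin n) → M) (ρ : List (Fin k) → ↥N),
    FreeHomOnto M π → FreeHomOnto (↥N) ρ →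
      ∀ X : Set M, X ⊆ (N : Set M) →
        (CForall C π X ↔ CForall C ρ (Subtype.val ⁻¹' X))

/-- `M` is `C^∃`-flat as a monoid: for every finitely generated submonoid `N ≤ M`,
a subset of `N` is a `C^∃`-subset of `M` iff it is a `C^∃`-subset of `N`;
i.e. `C^∃(M | N) = C^∃(N)`. -/
def MonoidCExistsFlat (C : LangClass) (M : Type) [Monoid M] : Prop :=
  ∀ (N : Submonoid M) (n k : ℕ) (π : List (Fin n) → M) (ρ : List (Fin k) → ↥N),
    FreeHomOnto M π → FreeHomOnto (↥N) ρ →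
      ∀ X : Set M, X ⊆ (N : Set M) →
        (CExists C π X ↔ CExists C ρ (Subtype.val ⁻¹' X))

/-! ### Auxiliary machinery -/

section Aux

lemma langclass_iUnion {C : LangClass} (hU : ClosedUnderUnion C) {N : ℕ}
    {ι : Type} [Fintype ι] (i₀ : ι) (L : ι → Set (List (Fin N)))
    (h : ∀ i, L i ∈ C N) : (⋃ i, L i) ∈ C N := by
  classical
  have key : ∀ s : Finset ι, ((⋃ i ∈ s, L i) ∪ L i₀) ∈ C N := by
    intro s
    induction s using Finset.induction_on with
    | empty => simpa using h i₀
    | @insert a s' ha ih =>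
        have heq : (⋃ i ∈ insert a s', L i) ∪ L i₀
            = L a ∪ ((⋃ i ∈ s', L i) ∪ L i₀) := by
          rw [Finset.set_biUnion_insert, Set.union_assoc]
        rw [heq]
        exact hU N _ (h a) _ ih
  have h2 := key Finset.univ
  have heq : (⋃ i ∈ Finset.univ, L i) ∪ L i₀ = ⋃ i, L i := by
    ext w; simp only [Finset.mem_univ, Set.iUnion_true, Set.mem_union, Set.mem_iUnion]
    constructor
    · rintro (⟨i, hi⟩ | hi) <;> [exact ⟨i, hi⟩; exact ⟨i₀, hi⟩]
    · rintro ⟨i, hi⟩; exact Or.inl ⟨i, hi⟩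
  rwa [heq] at h2

lemma marker_setup {n : ℕ} (u : List (Fin n)) :
    ∃ (N : ℕ) (p q : Fin N → List (Fin n)) (Rm : Set (List (Fin N))),
      IsRegularLang Rm ∧
      (∀ w' ∈ Rm, w'.flatMap p = w'.flatMap q ++ u) ∧
      (∀ v : List (Fin n), ∃ w' ∈ Rm, w'.flatMap q = v) := by
  classical
  set p : Fin (n+1) → List (Fin n) :=
    fun x => if h : (x : ℕ) < n then [⟨x, h⟩] else u with hp
  set q : Fin (n+1) → List (Fin n) :=
    fun x => if h : (x : ℕ) < n then [⟨x, h⟩] else [] with hq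
  set A : DFA (Fin (n+1)) (Fin 3) :=
    { step := fun s x => if s = 0 then (if (x : ℕ) < n then 0 else 1) else 2,
      start := 0, accept := {1} } with hA
  have step2 : ∀ w : List (Fin (n+1)), A.evalFrom 2 w = 2 := by
    intro w; induction w with
    | nil => rfl
    | cons x t ih =>
        have : A.step 2 x = 2 := by simp [hA]
        show A.evalFrom (A.step 2 x) t = 2
        rw [this]; exact ih
  have step1 : ∀ w : List (Fin (n+1)), A.evalFrom 1 w ∈ A.accept → w = [] := by
    intro w hw
    cases w with
    | nil => rfl
    | cons x t =>
        exfalso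
        have h1 : A.step 1 x = 2 := by simp [hA]
        have : A.evalFrom 1 (x :: t) = 2 := by
          show A.evalFrom (A.step 1 x) t = 2
          rw [h1]; exact step2 t
        rw [this] at hw
        simp [hA] at hw
  have decomp : ∀ w : List (Fin (n+1)), w ∈ A.accepts →
      ∃ v : List (Fin n), w = v.map Fin.castSucc ++ [Fin.last n] := by
    intro w
    rw [DFA.mem_accepts]
    show A.evalFrom 0 w ∈ A.accept → _
    induction w with
    | nil => intro hw; simp [hA] at hw
    | cons x t ih =>
        intro hw
        by_cases hx : (x : ℕ) < n
        · have h1 : A.step 0 x = 0 := by simp [hA, hx]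
          have h2 : A.evalFrom 0 t ∈ A.accept := by
            have : A.evalFrom 0 (x :: t) = A.evalFrom 0 t := by
              show A.evalFrom (A.step 0 x) t = _
              rw [h1]
            rwa [this] at hw
          obtain ⟨v, hv⟩ := ih h2
          refine ⟨⟨x, hx⟩ :: v, ?_⟩
          simp [hv]
        · have h1 : A.step 0 x = 1 := by simp [hA, hx]
          have h2 : A.evalFrom 1 t ∈ A.accept := by
            have : A.evalFrom 0 (x :: t) = A.evalFrom 1 t := by
              show A.evalFrom (A.step 0 x) t = _
              rw [h1]
            rwa [this] at hw
          have ht := step1 t h2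
          refine ⟨[], ?_⟩
          have hx' : x = Fin.last n := by
            have := x.isLt
            apply Fin.ext
            simp [Fin.last]
            omega
          simp [ht, hx']
  have flatp : ∀ v : List (Fin n), (v.map Fin.castSucc).flatMap p = v := by
    intro v; induction v with
    | nil => rfl
    | cons a t ih =>
        simp only [List.map_cons, List.flatMap_cons, ih]
        have : p (Fin.castSucc a) = [a] := by
          simp [hp]
        rw [this]; rfl
  have flatq : ∀ v : List (Fin n), (v.map Fin.castSucc).flatMap q = v := by
    intro v; induction v with
    | nil => rfl
    | cons a t ih =>
        simp only [List.map_cons, List.flatMap_cons, ih]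
        have : q (Fin.castSucc a) = [a] := by
          simp [hq]
        rw [this]; rfl
  have plast : p (Fin.last n) = u := by simp [hp]
  have qlast : q (Fin.last n) = [] := by simp [hq]
  refine ⟨n + 1, p, q, A.accepts, ⟨Fin 3, inferInstance, A, fun w => Iff.rfl⟩, ?_, ?_⟩
  · intro w hw
    obtain ⟨v, rfl⟩ := decomp w hw
    rw [List.flatMap_append, List.flatMap_append, flatp, flatq]
    simp [plast, qlast]
  · intro v
    refine ⟨v.map Fin.castSucc ++ [Fin.last n], ?_, ?_⟩
    · change (_ : List _) ∈ (A.accepts : Language (Fin (n+1)))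
      rw [DFA.mem_accepts]
      show A.evalFrom A.start _ ∈ A.accept
      rw [DFA.evalFrom_of_append]
      have h0 : A.evalFrom A.start (v.map Fin.castSucc) = 0 := by
        induction v with
        | nil => rfl
        | cons a t ih =>
            show A.evalFrom (A.step A.start (Fin.castSucc a)) (t.map Fin.castSucc) = 0
            have : A.step A.start (Fin.castSucc a) = 0 := by
              simp [hA]
            rw [this]; exact ih
      rw [h0]
      show A.step 0 (Fin.last n) ∈ A.accept
      simp [hA]
    · rw [List.flatMap_append, flatq]
      simp [qlast]

lemma coset_regular {G : Type} [Group G] {n : ℕ} (π : List (Fin n) → G)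
    (hπ : FreeHomOnto G π) (H : Subgroup G) (hfi : H.FiniteIndex) (c : G ⧸ H) :
    IsRegularLang {w : List (Fin n) | (↑((π w)⁻¹) : G ⧸ H) = c} := by
  classical
  have : Finite (G ⧸ H) := H.finite_quotient_of_finiteIndex
  have _ : Fintype (G ⧸ H) := Fintype.ofFinite _
  set r : G ⧸ H → G := fun d => (Quotient.out d)⁻¹ with hrdef
  have hr : ∀ d : G ⧸ H, (((r d)⁻¹ : G) : G ⧸ H) = d := by
    intro d; simp only [hrdef, inv_inv]; exact Quotient.out_eq d
  set A : DFA (Fin n) (G ⧸ H) :=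
    { step := fun s a => ↑((π [a])⁻¹ * (r s)⁻¹),
      start := ↑(1 : G), accept := {c} } with hA
  have key : ∀ (w : List (Fin n)) (x : G),
      A.evalFrom (↑(x⁻¹)) w = ↑((x * π w)⁻¹) := by
    intro w
    induction w with
    | nil => intro x; simp [hπ.map_nil]
    | cons a t ih =>
        intro x
        have hstep : A.step (↑(x⁻¹)) a = ↑(((r (↑(x⁻¹) : G ⧸ H)) * π [a])⁻¹) := by
          simp [hA, mul_inv_rev]
        show A.evalFrom (A.step (↑(x⁻¹)) a) t = _
        rw [hstep, ih (r (↑(x⁻¹) : G ⧸ H) * π [a])]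
        rw [QuotientGroup.eq]
        have hmem : r (↑(x⁻¹) : G ⧸ H) * x⁻¹ ∈ H := by
          have := hr (↑(x⁻¹) : G ⧸ H)
          rw [QuotientGroup.eq] at this
          simpa using this
        have hπc : π (a :: t) = π [a] * π t := by
          have : a :: t = [a] ++ t := rfl
          rw [this, hπ.map_append]
        rw [hπc]
        have : (r (↑x⁻¹ : G ⧸ H) * π [a] * π t)⁻¹⁻¹ * (x * (π [a] * π t))⁻¹
            = r (↑x⁻¹ : G ⧸ H) * x⁻¹ := by group
        rw [this]
        exact hmem
  refine ⟨G ⧸ H, inferInstance, A, fun w => ?_⟩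
  rw [DFA.mem_accepts]
  have hstart : A.start = (↑((1 : G)⁻¹) : G ⧸ H) := by simp [hA]
  show A.evalFrom A.start w ∈ A.accept ↔ _
  rw [hstart, key w 1]
  simp [hA]

lemma schreier_setup {G : Type} [Group G] {n k : ℕ} (π : List (Fin n) → G)
    (hπ : FreeHomOnto G π) (H : Subgroup G) (hfi : H.FiniteIndex)
    (ρ : List (Fin k) → ↥H) (hρ : FreeHomOnto (↥H) ρ) :
    ∃ (N : ℕ) (efun : Fin N → List (Fin n)) (hfun : Fin N → List (Fin k))
      (R : Set (List (Fin N))),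
      IsRegularLang R ∧
      (∀ w' ∈ R, ((ρ (w'.flatMap hfun) : ↥H) : G) = π (w'.flatMap efun)) ∧
      (∀ w : List (Fin n), π w ∈ H → ∃ w' ∈ R, w'.flatMap efun = w) := by
  classical
  have hfin : Finite (G ⧸ H) := H.finite_quotient_of_finiteIndex
  have _ : Fintype (G ⧸ H) := Fintype.ofFinite _
  set m := Fintype.card (G ⧸ H) with hm
  set E : Fin n × (G ⧸ H) ≃ Fin (n * m) :=
    ((Equiv.refl (Fin n)).prodCongr (Fintype.equivFin (G ⧸ H))).trans finProdFinEquiv with hE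
  set q0 : G ⧸ H := ((1 : G) : G ⧸ H) with hq0
  set r : G ⧸ H → G := fun c => if c = q0 then 1 else (Quotient.out c)⁻¹ with hrdef
  have hr : ∀ c : G ⧸ H, (↑((r c)⁻¹) : G ⧸ H) = c := by
    intro c
    by_cases h : c = q0
    · simp [hrdef, h, hq0]
    · simp only [hrdef, if_neg h, inv_inv]
      exact Quotient.out_eq c
  have hrq0 : r q0 = 1 := by simp [hrdef]
  set α : Fin n → G := fun a => π [a] with hα
  set next : G ⧸ H → Fin n → G ⧸ H := fun c a => ↑((r c * α a)⁻¹) with hnext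
  have smem : ∀ (c : G ⧸ H) (a : Fin n), r c * α a * (r (next c a))⁻¹ ∈ H := by
    intro c a
    have h1 : (↑((r (next c a))⁻¹) : G ⧸ H) = ↑((r c * α a)⁻¹) := hr (next c a)
    rw [QuotientGroup.eq] at h1
    have : (r (next c a))⁻¹⁻¹ * (r c * α a)⁻¹ ∈ H := h1
    have h2 : ((r (next c a))⁻¹⁻¹ * (r c * α a)⁻¹)⁻¹ ∈ H := H.inv_mem this
    have h3 : ((r (next c a))⁻¹⁻¹ * (r c * α a)⁻¹)⁻¹ = r c * α a * (r (next c a))⁻¹ := by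
      group
    rwa [h3] at h2
  set ufun : G ⧸ H → Fin n → List (Fin k) :=
    fun c a => (hρ.surjective ⟨r c * α a * (r (next c a))⁻¹, smem c a⟩).choose with hufun
  have hu : ∀ (c : G ⧸ H) (a : Fin n),
      ((ρ (ufun c a) : ↥H) : G) = r c * α a * (r (next c a))⁻¹ := by
    intro c a
    have := (hρ.surjective ⟨r c * α a * (r (next c a))⁻¹, smem c a⟩).choose_spec
    rw [hufun]
    rw [this]
  set efun : Fin (n * m) → List (Fin n) := fun x => [(E.symm x).1] with hefun
  set hfun : Fin (n * m) → List (Fin k) :=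
    fun x => ufun (E.symm x).2 (E.symm x).1 with hhfun
  set A : DFA (Fin (n * m)) (Option (G ⧸ H)) :=
    { step := fun s x => s.bind fun c =>
        if (E.symm x).2 = c then some (next c (E.symm x).1) else none,
      start := some q0, accept := {some q0} } with hA
  have hnone : ∀ w : List (Fin (n * m)), A.evalFrom none w = none := by
    intro w; induction w with
    | nil => rfl
    | cons x t ih =>
        show A.evalFrom (A.step none x) t = none
        have : A.step none x = none := rfl
        rw [this]; exact ih
  have key : ∀ (w' : List (Fin (n * m))) (c c' : G ⧸ H),
      A.evalFrom (some c) w' = some c' →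
      ((ρ (w'.flatMap hfun) : ↥H) : G) * r c' = r c * π (w'.flatMap efun) := by
    intro w'
    induction w' with
    | nil =>
        intro c c' h
        have : c = c' := by simpa using h
        subst this
        simp [hρ.map_nil, hπ.map_nil]
    | cons x t ih =>
        intro c c' h
        by_cases hx : (E.symm x).2 = c
        · have hstep : A.step (some c) x = some (next c (E.symm x).1) := by
            simp [hA, hx]
          have h' : A.evalFrom (some (next c (E.symm x).1)) t = some c' := by
            have : A.evalFrom (some c) (x :: t) = A.evalFrom (A.step (some c) x) t := rfl
            rw [this, hstep] at h
            exact h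
          have iht := ih (next c (E.symm x).1) c' h'
          have hsplit : (x :: t).flatMap hfun = hfun x ++ t.flatMap hfun := by
            simp [List.flatMap_cons]
          have hesplit : (x :: t).flatMap efun = efun x ++ t.flatMap efun := by
            simp [List.flatMap_cons]
          rw [hsplit, hesplit, hρ.map_append, hπ.map_append]
          push_cast
          have hfx : ((ρ (hfun x) : ↥H) : G)
              = r c * α (E.symm x).1 * (r (next c (E.symm x).1))⁻¹ := by
            rw [hhfun]
            simp only [hx]
            exact hu c (E.symm x).1
          have hex : π (efun x) = α (E.symm x).1 := rfl
          rw [hfx, hex]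
          rw [mul_assoc _ _ (r c'), iht]
          group
        · exfalso
          have hstep : A.step (some c) x = none := by
            simp [hA, hx]
          have : A.evalFrom (some c) (x :: t) = none := by
            show A.evalFrom (A.step (some c) x) t = none
            rw [hstep]; exact hnone t
          rw [this] at h
          cases h
  have lift : ∀ (w : List (Fin n)) (c : G ⧸ H),
      ∃ w' : List (Fin (n * m)), w'.flatMap efun = w ∧
        A.evalFrom (some c) w' = some ↑((π w)⁻¹ * (r c)⁻¹) := by
    intro w
    induction w with
    | nil =>
        intro c
        refine ⟨[], rfl, ?_⟩
        show some c = _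
        congr 1
        rw [hπ.map_nil]
        rw [inv_one, one_mul]
        exact (hr c).symm
    | cons a w ih =>
        intro c
        obtain ⟨w₁, hw₁e, hw₁ev⟩ := ih (next c a)
        refine ⟨E (a, c) :: w₁, ?_, ?_⟩
        · have : efun (E (a, c)) = [a] := by
            rw [hefun]; simp
          simp [List.flatMap_cons, this, hw₁e]
        · have hstep : A.step (some c) (E (a, c)) = some (next c a) := by
            simp [hA]
          show A.evalFrom (A.step (some c) (E (a, c))) w₁ = _
          rw [hstep, hw₁ev]
          congr 1
          rw [QuotientGroup.eq]
          have h1 : (↑((r (next c a))⁻¹) : G ⧸ H) = ↑((r c * α a)⁻¹) := hr (next c a)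
          rw [QuotientGroup.eq] at h1
          have hπc : π (a :: w) = α a * π w := by
            have : a :: w = [a] ++ w := rfl
            rw [this, hπ.map_append, hα]
          rw [hπc]
          have heq : ((π w)⁻¹ * (r (next c a))⁻¹)⁻¹ * ((α a * π w)⁻¹ * (r c)⁻¹)
              = r (next c a) * ((α a)⁻¹ * (r c)⁻¹) := by group
          have heq2 : (r (next c a))⁻¹⁻¹ * (r c * α a)⁻¹
              = r (next c a) * ((α a)⁻¹ * (r c)⁻¹) := by group
          rw [heq]
          rw [← heq2]
          exact h1
  refine ⟨n * m, efun, hfun, A.accepts, ⟨Option (G ⧸ H), inferInstance, A, fun w => Iff.rfl⟩,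
    ?_, ?_⟩
  · intro w' hw'
    change w' ∈ (A.accepts : Language (Fin (n * m))) at hw'
    rw [DFA.mem_accepts] at hw'
    have hev : A.evalFrom (some q0) w' = some q0 := by
      have : A.eval w' ∈ ({some q0} : Set (Option (G ⧸ H))) := hw'
      simpa [DFA.eval, hA] using this
    have := key w' q0 q0 hev
    rwa [hrq0, mul_one, one_mul] at this
  · intro w hw
    obtain ⟨w', hw'e, hw'ev⟩ := lift w q0
    refine ⟨w', ?_, hw'e⟩
    change w' ∈ (A.accepts : Language (Fin (n * m)))
    rw [DFA.mem_accepts]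
    show A.evalFrom A.start w' ∈ A.accept
    have hstart : A.start = some q0 := rfl
    rw [hstart, hw'ev]
    have : (↑((π w)⁻¹ * (r q0)⁻¹) : G ⧸ H) = q0 := by
      rw [hrq0, inv_one, mul_one, hq0, QuotientGroup.eq]
      simpa using hw
    rw [this]
    exact rfl

lemma forall_translate (C : LangClass) (hC : IsFullSemiAFL C) {G : Type} [Group G]
    {n : ℕ} (π : List (Fin n) → G) (hπ : FreeHomOnto G π) (g : G) (X : Set G)
    (hX : CForall C π X) : CForall C π ((· * g) ⁻¹' X) := by
  obtain ⟨⟨hHom, hInv, hReg⟩, hU⟩ := hC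
  obtain ⟨u, hu⟩ := hπ.surjective g
  obtain ⟨N, p, q, Rm, hRmreg, hRm1, hRm2⟩ := marker_setup u
  have hL1 : {w' : List (Fin N) | w'.flatMap p ∈ {w | π w ∈ X}} ∈ C N :=
    hInv N n p _ hX
  have hL2 : ({w' : List (Fin N) | w'.flatMap p ∈ {w | π w ∈ X}} ∩ Rm) ∈ C N :=
    hReg N _ hL1 Rm hRmreg
  have hL3 := hHom N n q _ hL2
  have heq : (fun w' : List (Fin N) => w'.flatMap q) ''
      ({w' | w'.flatMap p ∈ {w | π w ∈ X}} ∩ Rm) = {w | π w ∈ (· * g) ⁻¹' X} := by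
    ext v
    constructor
    · rintro ⟨w', ⟨hp', hRm⟩, rfl⟩
      have hdec := hRm1 w' hRm
      simp only [Set.mem_setOf_eq] at hp' ⊢
      rw [Set.mem_preimage]
      rw [hdec, hπ.map_append, hu] at hp'
      exact hp'
    · intro hv
      obtain ⟨w', hw'Rm, hw'q⟩ := hRm2 v
      refine ⟨w', ⟨?_, hw'Rm⟩, hw'q⟩
      simp only [Set.mem_setOf_eq]
      rw [hRm1 w' hw'Rm, hw'q, hπ.map_append, hu]
      exact hv
  rw [heq] at hL3
  exact hL3

lemma exists_translate (C : LangClass) (hC : IsFullSemiAFL C) {G : Type} [Group G]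
    {n : ℕ} (π : List (Fin n) → G) (hπ : FreeHomOnto G π) (g : G) (X : Set G)
    (hX : CExists C π X) : CExists C π ((· * g) '' X) := by
  obtain ⟨⟨hHom, hInv, hReg⟩, hU⟩ := hC
  obtain ⟨u, hu⟩ := hπ.surjective g
  obtain ⟨N, p, q, Rm, hRmreg, hRm1, hRm2⟩ := marker_setup u
  obtain ⟨L, hL, hLX⟩ := hX
  have hL1 : {w' : List (Fin N) | w'.flatMap q ∈ L} ∈ C N := hInv N n q _ hL
  have hL2 : ({w' : List (Fin N) | w'.flatMap q ∈ L} ∩ Rm) ∈ C N :=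
    hReg N _ hL1 Rm hRmreg
  have hL3 := hHom N n p _ hL2
  refine ⟨_, hL3, ?_⟩
  ext x
  constructor
  · rintro ⟨v, ⟨w', ⟨hq', hRm⟩, rfl⟩, rfl⟩
    refine ⟨π (w'.flatMap q), ?_, ?_⟩
    · rw [← hLX]; exact ⟨w'.flatMap q, hq', rfl⟩
    · show π (w'.flatMap q) * g = π (w'.flatMap p)
      rw [hRm1 w' hRm, hπ.map_append, hu]
  · rintro ⟨y, hy, rfl⟩
    rw [← hLX] at hy
    obtain ⟨w, hwL, rfl⟩ := hy
    obtain ⟨w', hw'Rm, hw'q⟩ := hRm2 w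
    refine ⟨w'.flatMap p, ⟨w', ⟨?_, hw'Rm⟩, rfl⟩, ?_⟩
    · simp only [Set.mem_setOf_eq, hw'q]; exact hwL
    · show π (w'.flatMap p) = π w * g
      rw [hRm1 w' hw'Rm, hw'q, hπ.map_append, hu]

lemma easy_hom {G : Type} [Group G] {n k : ℕ} (π : List (Fin n) → G)
    (hπ : FreeHomOnto G π) (H : Subgroup G) (ρ : List (Fin k) → ↥H)
    (hρ : FreeHomOnto (↥H) ρ) :
    ∃ f : Fin k → List (Fin n), ∀ w : List (Fin k),
      π (w.flatMap f) = ((ρ w : ↥H) : G) := by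
  choose f hf using fun i : Fin k => hπ.surjective ((ρ [i] : ↥H) : G)
  refine ⟨f, ?_⟩
  intro w
  induction w with
  | nil => simp [hπ.map_nil, hρ.map_nil]
  | cons a t ih =>
      have h1 : (a :: t).flatMap f = f a ++ t.flatMap f := by
        simp [List.flatMap_cons]
      have h2 : ρ (a :: t) = ρ [a] * ρ t := by
        have : a :: t = [a] ++ t := rfl
        rw [this, hρ.map_append]
      rw [h1, hπ.map_append, hf a, ih, h2]
      norm_cast

lemma easy_forall (C : LangClass) (hC : IsFullSemiAFL C) {G : Type} [Group G]
    {n k : ℕ} (π : List (Fin n) → G) (hπ : FreeHomOnto G π) (H : Subgroup G)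
    (ρ : List (Fin k) → ↥H) (hρ : FreeHomOnto (↥H) ρ) (X : Set G)
    (hX : CForall C π X) : CForall C ρ (Subtype.val ⁻¹' X) := by
  obtain ⟨f, hf⟩ := easy_hom π hπ H ρ hρ
  have h1 := hC.1.2.1 k n f _ hX
  have heq : {w : List (Fin k) | w.flatMap f ∈ {v | π v ∈ X}}
      = {w : List (Fin k) | ρ w ∈ Subtype.val ⁻¹' X} := by
    ext w
    simp only [Set.mem_setOf_eq, Set.mem_preimage, hf w]
  rw [heq] at h1
  exact h1

lemma easy_exists (C : LangClass) (hC : IsFullSemiAFL C) {G : Type} [Group G]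
    {n k : ℕ} (π : List (Fin n) → G) (hπ : FreeHomOnto G π) (H : Subgroup G)
    (ρ : List (Fin k) → ↥H) (hρ : FreeHomOnto (↥H) ρ) (Y : Set ↥H)
    (hY : CExists C ρ Y) : CExists C π (Subtype.val '' Y) := by
  obtain ⟨f, hf⟩ := easy_hom π hπ H ρ hρ
  obtain ⟨L, hL, hLY⟩ := hY
  refine ⟨(fun w : List (Fin k) => w.flatMap f) '' L, hC.1.1 k n f _ hL, ?_⟩
  rw [← hLY, Set.image_image, Set.image_image]
  apply Set.image_congr
  intro w _
  exact hf w

lemma hard_forall (C : LangClass) (hC : IsFullSemiAFL C) {G : Type} [Group G]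
    {n k : ℕ} (π : List (Fin n) → G) (hπ : FreeHomOnto G π) (H : Subgroup G)
    (hfi : H.FiniteIndex) (ρ : List (Fin k) → ↥H) (hρ : FreeHomOnto (↥H) ρ)
    (Y : Set ↥H) (hY : CForall C ρ Y) : CForall C π (Subtype.val '' Y) := by
  obtain ⟨⟨hHom, hInv, hReg⟩, hU⟩ := hC
  obtain ⟨N, efun, hfun, R, hRreg, hR1, hR2⟩ := schreier_setup π hπ H hfi ρ hρ
  have hL1 : {w' : List (Fin N) | w'.flatMap hfun ∈ {v | ρ v ∈ Y}} ∈ C N :=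
    hInv N k hfun _ hY
  have hL2 := hReg N _ hL1 R hRreg
  have hL3 := hHom N n efun _ hL2
  have heq : (fun w' : List (Fin N) => w'.flatMap efun) ''
      ({w' | w'.flatMap hfun ∈ {v | ρ v ∈ Y}} ∩ R)
      = {w : List (Fin n) | π w ∈ Subtype.val '' Y} := by
    ext w
    constructor
    · rintro ⟨w', ⟨hmem, hwR⟩, rfl⟩
      exact ⟨ρ (w'.flatMap hfun), hmem, hR1 w' hwR⟩
    · intro hw
      simp only [Set.mem_setOf_eq] at hw
      obtain ⟨y, hy, hyw⟩ := hw
      have hwH : π w ∈ H := by rw [← hyw]; exact y.2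
      obtain ⟨w', hw'R, hw'e⟩ := hR2 w hwH
      refine ⟨w', ⟨?_, hw'R⟩, hw'e⟩
      have h1 : ((ρ (w'.flatMap hfun) : ↥H) : G) = π w := by
        rw [hR1 w' hw'R, hw'e]
      have h2 : ρ (w'.flatMap hfun) = y :=
        Subtype.coe_injective (h1.trans hyw.symm)
      simp only [Set.mem_setOf_eq, h2]
      exact hy
  rw [heq] at hL3
  exact hL3

lemma hard_exists (C : LangClass) (hC : IsFullSemiAFL C) {G : Type} [Group G]
    {n k : ℕ} (π : List (Fin n) → G) (hπ : FreeHomOnto G π) (H : Subgroup G)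
    (hfi : H.FiniteIndex) (ρ : List (Fin k) → ↥H) (hρ : FreeHomOnto (↥H) ρ)
    (X : Set G) (hX : CExists C π X) : CExists C ρ (Subtype.val ⁻¹' X) := by
  obtain ⟨⟨hHom, hInv, hReg⟩, hU⟩ := hC
  obtain ⟨N, efun, hfun, R, hRreg, hR1, hR2⟩ := schreier_setup π hπ H hfi ρ hρ
  obtain ⟨L, hL, hLX⟩ := hX
  have hL1 : {w' : List (Fin N) | w'.flatMap efun ∈ L} ∈ C N := hInv N n efun _ hL
  have hL2 := hReg N _ hL1 R hRreg
  have hL3 := hHom N k hfun _ hL2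
  refine ⟨_, hL3, ?_⟩
  ext y
  constructor
  · rintro ⟨v, ⟨w', ⟨hmemL, hwR⟩, rfl⟩, rfl⟩
    have hgoal : ((ρ (w'.flatMap hfun) : ↥H) : G) ∈ X := by
      rw [hR1 w' hwR, ← hLX]
      exact ⟨w'.flatMap efun, hmemL, rfl⟩
    exact hgoal
  · intro hy
    rw [Set.mem_preimage, ← hLX] at hy
    obtain ⟨w, hwL, hwv⟩ := hy
    have hwH : π w ∈ H := by rw [hwv]; exact y.2
    obtain ⟨w', hw'R, hw'e⟩ := hR2 w hwH
    refine ⟨w'.flatMap hfun, ⟨w', ⟨?_, hw'R⟩, rfl⟩, ?_⟩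
    · simp only [Set.mem_setOf_eq, hw'e]; exact hwL
    · apply Subtype.coe_injective
      show ((ρ (w'.flatMap hfun) : ↥H) : G) = (y : G)
      rw [hR1 w' hw'R, hw'e, hwv]

end Aux

/-- Let `C` be a full semi-AFL, `G` a finitely generated group and
`H ≤ G` of finite index.  Then, for each `• ∈ {∀, ∃}`, the family `C^•(G)` is closed
under complement (in `G`) iff the family `C^•(H)` is closed under complement (in `H`). -/
theorem stmt10 (C : LangClass) (hC : IsFullSemiAFL C)
    {G : Type} [Group G] {n k : ℕ} (π : List (Fin n) → G) (hπ : FreeHomOnto G π)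
    (H : Subgroup G) (hfi : H.FiniteIndex)
    (ρ : List (Fin k) → ↥H) (hρ : FreeHomOnto (↥H) ρ) :
    ((∀ X : Set G, CForall C π X → CForall C π Xᶜ) ↔
      (∀ Y : Set ↥H, CForall C ρ Y → CForall C ρ Yᶜ)) ∧
    ((∀ X : Set G, CExists C π X → CExists C π Xᶜ) ↔
      (∀ Y : Set ↥H, CExists C ρ Y → CExists C ρ Yᶜ)) := by
  classical
  have hfin : Finite (G ⧸ H) := H.finite_quotient_of_finiteIndex
  have _ : Fintype (G ⧸ H) := Fintype.ofFinite _
  set r : G ⧸ H → G := fun c => (Quotient.out c)⁻¹ with hrdef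
  have hr : ∀ c : G ⧸ H, (↑((r c)⁻¹) : G ⧸ H) = c := by
    intro c; simp only [hrdef, inv_inv]; exact Quotient.out_eq c
  set T : G ⧸ H → Set G := fun c => {x : G | (↑(x⁻¹) : G ⧸ H) = c} with hT
  have hTr : ∀ (c : G ⧸ H) (x : G), x ∈ T c ↔ x * (r c)⁻¹ ∈ H := by
    intro c x
    simp only [hT, Set.mem_setOf_eq]
    constructor
    · intro h
      have h2 := h.trans (hr c).symm
      rw [QuotientGroup.eq] at h2
      simpa using h2
    · intro h
      rw [← hr c, QuotientGroup.eq]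
      simpa using h
  have hTmem : ∀ x : G, x ∈ T (↑(x⁻¹)) := fun x => rfl
  have hunion : ∀ X : Set G, (⋃ c, T c \ X) = Xᶜ := by
    intro X
    ext x
    simp only [Set.mem_iUnion, Set.mem_diff, Set.mem_compl_iff]
    constructor
    · rintro ⟨c, _, hx⟩; exact hx
    · intro hx; exact ⟨↑(x⁻¹), hTmem x, hx⟩
  have hrinv : ∀ (c : G ⧸ H) (x : G), x * (r c)⁻¹ * r c = x := by
    intro c x; group
  have hrinv' : ∀ (c : G ⧸ H) (x : G), x * r c * (r c)⁻¹ = x := by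
    intro c x; group
  constructor
  · -- ∀ case
    constructor
    · intro hG Y hY
      have h1 := hard_forall C hC π hπ H hfi ρ hρ Y hY
      have h2 := hG _ h1
      have h3 := easy_forall C hC π hπ H ρ hρ _ h2
      have heq : Subtype.val ⁻¹' (Subtype.val '' Y)ᶜ = Yᶜ := by
        rw [Set.preimage_compl, Set.preimage_image_eq Y Subtype.coe_injective]
      rwa [heq] at h3
    · intro hH X hX
      have main : ∀ c : G ⧸ H, CForall C π (T c \ X) := by
        intro c
        have hreg := coset_regular π hπ H hfi c
        have h1 : CForall C π (X ∩ T c) := by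
          have h0 := hC.1.2.2 n _ hX {w : List (Fin n) | (↑((π w)⁻¹) : G ⧸ H) = c} hreg
          have heq : {w : List (Fin n) | π w ∈ X} ∩ {w | (↑((π w)⁻¹) : G ⧸ H) = c}
              = {w : List (Fin n) | π w ∈ X ∩ T c} := by
            ext w
            simp only [Set.mem_inter_iff, Set.mem_setOf_eq, hT]
          rw [heq] at h0
          exact h0
        have h2 : CForall C π ((· * r c) ⁻¹' (X ∩ T c)) :=
          forall_translate C hC π hπ (r c) _ h1
        set Xc : Set G := (· * r c) ⁻¹' (X ∩ T c) with hXc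
        have h3 : CForall C ρ (Subtype.val ⁻¹' Xc) :=
          easy_forall C hC π hπ H ρ hρ _ h2
        have h4 := hH _ h3
        have h5 : CForall C π (Subtype.val '' (Subtype.val ⁻¹' Xc)ᶜ) :=
          hard_forall C hC π hπ H hfi ρ hρ _ h4
        have himg : (Subtype.val '' ((Subtype.val ⁻¹' Xc : Set ↥H))ᶜ : Set G)
            = (H : Set G) ∩ Xcᶜ := by
          rw [← Set.preimage_compl, Set.image_preimage_eq_inter_range, Subtype.range_coe]
          exact Set.inter_comm _ _
        rw [himg] at h5
        have h6 : CForall C π ((· * (r c)⁻¹) ⁻¹' ((H : Set G) ∩ Xcᶜ)) :=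
          forall_translate C hC π hπ ((r c)⁻¹) _ h5
        have hfinal : (· * (r c)⁻¹) ⁻¹' ((H : Set G) ∩ Xcᶜ) = T c \ X := by
          ext x
          simp only [Set.mem_preimage, Set.mem_inter_iff, Set.mem_compl_iff,
            Set.mem_diff, SetLike.mem_coe]
          constructor
          · rintro ⟨hxH, hxXc⟩
            have hxT : x ∈ T c := (hTr c x).mpr hxH
            refine ⟨hxT, fun hxX => hxXc ?_⟩
            show x * (r c)⁻¹ * r c ∈ X ∩ T c
            rw [hrinv c x]
            exact ⟨hxX, hxT⟩
          · rintro ⟨hxT, hxX⟩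
            refine ⟨(hTr c x).mp hxT, fun hmem => ?_⟩
            have : x * (r c)⁻¹ * r c ∈ X ∩ T c := hmem
            rw [hrinv c x] at this
            exact hxX this.1
        rwa [hfinal] at h6
      have hfin2 : CForall C π (⋃ c, T c \ X) := by
        have heq : {w : List (Fin n) | π w ∈ ⋃ c, T c \ X}
            = ⋃ c, {w : List (Fin n) | π w ∈ T c \ X} := by
          ext w; simp
        show {w : List (Fin n) | π w ∈ ⋃ c, T c \ X} ∈ C n
        rw [heq]
        exact langclass_iUnion hC.2 ((1 : G) : G ⧸ H) _ main
      rwa [hunion X] at hfin2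
  · -- ∃ case
    constructor
    · intro hG Y hY
      have h1 := easy_exists C hC π hπ H ρ hρ Y hY
      have h2 := hG _ h1
      have h3 := hard_exists C hC π hπ H hfi ρ hρ _ h2
      have heq : Subtype.val ⁻¹' (Subtype.val '' Y)ᶜ = Yᶜ := by
        rw [Set.preimage_compl, Set.preimage_image_eq Y Subtype.coe_injective]
      rwa [heq] at h3
    · intro hH X hX
      have main : ∀ c : G ⧸ H, CExists C π (T c \ X) := by
        intro c
        have hreg := coset_regular π hπ H hfi c
        have h1 : CExists C π (X ∩ T c) := by
          obtain ⟨L, hL, hLX⟩ := hX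
          refine ⟨L ∩ {w : List (Fin n) | (↑((π w)⁻¹) : G ⧸ H) = c},
            hC.1.2.2 n L hL _ hreg, ?_⟩
          ext x
          constructor
          · rintro ⟨w, ⟨hwL, hwc⟩, rfl⟩
            exact ⟨hLX ▸ ⟨w, hwL, rfl⟩, hwc⟩
          · rintro ⟨hxX, hxT⟩
            rw [← hLX] at hxX
            obtain ⟨w, hwL, rfl⟩ := hxX
            exact ⟨w, ⟨hwL, hxT⟩, rfl⟩
        have h2 : CExists C π ((· * (r c)⁻¹) '' (X ∩ T c)) :=
          exists_translate C hC π hπ ((r c)⁻¹) _ h1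
        set Xc : Set G := (· * (r c)⁻¹) '' (X ∩ T c) with hXc
        have hXcmem : ∀ z : G, z ∈ Xc ↔ z * r c ∈ X ∩ T c := by
          intro z
          constructor
          · rintro ⟨x, hx, rfl⟩
            show x * (r c)⁻¹ * r c ∈ X ∩ T c
            rw [hrinv c x]
            exact hx
          · intro h
            exact ⟨z * r c, h, hrinv' c z⟩
        have h3 : CExists C ρ (Subtype.val ⁻¹' Xc) :=
          hard_exists C hC π hπ H hfi ρ hρ _ h2
        have h4 := hH _ h3
        have h5 : CExists C π (Subtype.val '' (Subtype.val ⁻¹' Xc)ᶜ) :=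
          easy_exists C hC π hπ H ρ hρ _ h4
        have himg : (Subtype.val '' ((Subtype.val ⁻¹' Xc : Set ↥H))ᶜ : Set G)
            = (H : Set G) ∩ Xcᶜ := by
          rw [← Set.preimage_compl, Set.image_preimage_eq_inter_range, Subtype.range_coe]
          exact Set.inter_comm _ _
        rw [himg] at h5
        have h6 : CExists C π ((· * r c) '' ((H : Set G) ∩ Xcᶜ)) :=
          exists_translate C hC π hπ (r c) _ h5
        have hfinal : (· * r c) '' ((H : Set G) ∩ Xcᶜ) = T c \ X := by
          ext z
          constructor
          · rintro ⟨y, ⟨hyH, hyXc⟩, rfl⟩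
            have hzT : y * r c ∈ T c := by
              rw [hTr c (y * r c), hrinv' c y]
              exact hyH
            refine ⟨hzT, fun hzX => hyXc ?_⟩
            exact (hXcmem y).mpr ⟨hzX, hzT⟩
          · rintro ⟨hzT, hzX⟩
            refine ⟨z * (r c)⁻¹, ⟨(hTr c z).mp hzT, fun hmem => ?_⟩, hrinv c z⟩
            have := (hXcmem (z * (r c)⁻¹)).mp hmem
            rw [hrinv c z] at this
            exact hzX this.1
        rwa [hfinal] at h6
      choose Ls hLs hLs2 using fun c => main c
      have hfin2 : CExists C π (⋃ c, T c \ X) := by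
        refine ⟨⋃ c, Ls c, langclass_iUnion hC.2 ((1 : G) : G ⧸ H) _ hLs, ?_⟩
        rw [Set.image_iUnion]
        exact Set.iUnion_congr hLs2
      rwa [hunion X] at hfin2
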